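/- Let α ∈ (−1, −1/2) be fixed and set l_α := |α+1/2|/(4(α+1)(α+2)) and L_α := 1/((α+1)(α+2)). Then for every u' ∈ [0,1], l_α·ρ_{α+2}(u') ≤ ∫_{u'}^1 |Π_α(u)| du ≤ L_α·ρ_{α+2}(u'), where ρ_{α+2}(u') := (Γ(α+3)/(√π·Γ(α+5/2)))·((1−u')(1+u'))^{α+3/2}. -/

import Mathlib

open Real

/-- The function `Π_α(u)` for `α ∈ (-1, -1/2)`. -/
noncomputable def PiFun (α u : ℝ) : ℝ :=
  Real.Gamma (α + 1) / (Real.sqrt π * Real.Gamma (α + 1/2)) *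
    ∫ w in (0 : ℝ)..u, (1 - w ^ 2) ^ (α - 1/2)

/-- The density `ρ_{α+2}` of the measure `dΠ_{α+2}`. -/
noncomputable def rhoFun (α u : ℝ) : ℝ :=
  Real.Gamma (α + 3) / (Real.sqrt π * Real.Gamma (α + 5/2)) * ((1 - u) * (1 + u)) ^ (α + 3/2)

open MeasureTheory Set in
set_option maxHeartbeats 1000000 in
theorem PiFun_tail_integral_density_bounds (α : ℝ) (hα : α ∈ Set.Ioo (-1 : ℝ) (-1/2))
    (u' : ℝ) (hu' : u' ∈ Set.Icc (0 : ℝ) 1) :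
    |α + 1/2| / (4 * (α + 1) * (α + 2)) * rhoFun α u' ≤ ∫ u in u'..1, |PiFun α u| ∧
    (∫ u in u'..1, |PiFun α u|) ≤ 1 / ((α + 1) * (α + 2)) * rhoFun α u' := by
  obtain ⟨hαl, hαr⟩ := hα
  obtain ⟨hu0, hu1⟩ := hu'
  have hq0 : (0:ℝ) < -(α + 1/2) := by linarith
  have hp0 : (0:ℝ) < α + 3/2 := by linarith
  have hp1 : α + 3/2 ≤ 1 := by linarith
  have h1pos : (0:ℝ) < α + 1 := by linarith
  have h2pos : (0:ℝ) < α + 2 := by linarith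
  have hsπ : (0:ℝ) < Real.sqrt π := Real.sqrt_pos.2 Real.pi_pos
  have hG1 : 0 < Real.Gamma (α + 1) := Real.Gamma_pos_of_pos h1pos
  have hG32 : 0 < Real.Gamma (α + 3/2) := Real.Gamma_pos_of_pos (by linarith)
  have hG2rec : Real.Gamma (α + 3/2) = (α + 1/2) * Real.Gamma (α + 1/2) := by
    have h := Real.Gamma_add_one (s := α + 1/2) (ne_of_lt (by linarith))
    rw [show α + 1/2 + 1 = α + 3/2 by ring] at h
    exact h
  have hG2neg : Real.Gamma (α + 1/2) < 0 := by
    rcases lt_or_ge (Real.Gamma (α + 1/2)) 0 with h | h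
    · exact h
    · exfalso
      linarith [mul_nonneg (show (0:ℝ) ≤ -(α+1/2) by linarith) h, hG32, hG2rec]
  have hG52 : Real.Gamma (α + 5/2) = (α + 3/2) * ((α + 1/2) * Real.Gamma (α + 1/2)) := by
    have h := Real.Gamma_add_one (s := α + 3/2) (ne_of_gt hp0)
    rw [show α + 3/2 + 1 = α + 5/2 by ring] at h
    rw [h, hG2rec]
  have hG3 : Real.Gamma (α + 3) = (α + 2) * ((α + 1) * Real.Gamma (α + 1)) := by
    have h1 := Real.Gamma_add_one (s := α + 2) (ne_of_gt h2pos)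
    have h2 := Real.Gamma_add_one (s := α + 1) (ne_of_gt h1pos)
    rw [show α + 3 = α + 2 + 1 by ring, h1, show α + 2 = α + 1 + 1 by ring, h2]
  set c : ℝ := Real.Gamma (α + 1) / (Real.sqrt π * Real.Gamma (α + 1/2)) with hc
  set C : ℝ := Real.Gamma (α + 3) / (Real.sqrt π * Real.Gamma (α + 5/2)) with hC
  have hcneg : c < 0 := by
    rw [hc]; exact div_neg_of_pos_of_neg hG1 (mul_neg_of_pos_of_neg hsπ hG2neg)
  have hKpos : 0 < -c := neg_pos.2 hcneg
  have hCpos : 0 < C := by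
    rw [hC, hG3, hG52]
    exact div_pos (mul_pos h2pos (mul_pos h1pos hG1))
      (mul_pos hsπ (mul_pos hp0 (by rw [← hG2rec]; exact hG32)))
  have hne_e : α + 1/2 ≠ 0 := ne_of_lt (by linarith)
  have hne_p : α + 3/2 ≠ 0 := ne_of_gt hp0
  have hne1 : α + 1 ≠ 0 := ne_of_gt h1pos
  have hne2 : α + 2 ≠ 0 := ne_of_gt h2pos
  have hsπne : Real.sqrt π ≠ 0 := ne_of_gt hsπ
  have hG2ne : Real.Gamma (α + 1/2) ≠ 0 := ne_of_lt hG2neg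
  have hCc : C = (α+1)*(α+2) / ((α+3/2)*(α+1/2)) * c := by
    rw [hC, hc, hG3, hG52, div_mul_div_comm]
    congr 1
    · ring
    · ring
  have key : (α+1)*(α+2) / ((α+3/2)*(α+1/2))
      * ((α + 3/2) * (-(α + 1/2)) / ((α + 1) * (α + 2))) = -1 := by
    rw [div_mul_div_comm,
      div_eq_iff (mul_ne_zero (mul_ne_zero hne_p hne_e) (mul_ne_zero hne1 hne2))]
    ring
  have hKC : -c = C * ((α + 3/2) * (-(α + 1/2)) / ((α + 1) * (α + 2))) := by
    rw [hCc, mul_right_comm, key]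
    ring
  -- degenerate case u' = 1
  rcases eq_or_lt_of_le hu1 with heq | hu1'
  · subst heq
    rw [intervalIntegral.integral_same]
    have hrho0 : rhoFun α 1 = 0 := by
      unfold rhoFun
      rw [show ((1:ℝ) - 1) * (1 + 1) = 0 by norm_num, Real.zero_rpow (ne_of_gt hp0), mul_zero]
    constructor <;> simp [hrho0]
  -- main case u' < 1
  -- integrability of the inner integrand
  have hIf1 : ∀ a b : ℝ, 0 ≤ a → a ≤ b → b < 1 →
      IntervalIntegrable (fun w : ℝ => (1 - w ^ 2) ^ (α - 1/2)) volume a b := by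
    intro a b ha hab hb
    apply ContinuousOn.intervalIntegrable
    apply ContinuousOn.rpow_const (continuous_const.sub (continuous_pow 2)).continuousOn
    intro x hx
    rw [uIcc_of_le hab] at hx
    left
    show (1:ℝ) - x^2 ≠ 0
    nlinarith [hx.1, hx.2]
  have hIf2 : ∀ u : ℝ, 0 ≤ u → u < 1 →
      IntervalIntegrable (fun w : ℝ => (1 - w) ^ (α - 1/2)) volume 0 u := by
    intro u h0 h1u
    apply ContinuousOn.intervalIntegrable
    apply ContinuousOn.rpow_const (continuous_const.sub continuous_id).continuousOn
    intro x hx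
    rw [uIcc_of_le h0] at hx
    left
    exact sub_ne_zero_of_ne (lt_of_le_of_lt hx.2 h1u).ne'
  have hIf3 : IntervalIntegrable (fun u : ℝ => (1 - u) ^ (α + 1/2)) volume u' 1 := by
    have h := (intervalIntegral.intervalIntegrable_rpow' (r := α + 1/2) (by linarith)
        (a := 1 - u') (b := 0)).comp_sub_left 1
    simpa using h
  -- evaluations
  have hval2 : ∀ u : ℝ, 0 ≤ u → u < 1 →
      (∫ w in (0:ℝ)..u, (1 - w) ^ (α - 1/2)) = (1 - (1-u)^(α+1/2)) / (α+1/2) := by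
    intro u h0 h1u
    rw [show (∫ w in (0:ℝ)..u, (1 - w) ^ (α - 1/2))
        = ∫ x in (1 - u)..(1 - 0), x ^ (α - 1/2) from
      intervalIntegral.integral_comp_sub_left (fun x : ℝ => x ^ (α - 1/2)) 1]
    rw [integral_rpow (Or.inr ⟨by linarith, Set.notMem_uIcc_of_lt (by linarith) (by norm_num)⟩)]
    rw [show α - 1/2 + 1 = α + 1/2 by ring]
    norm_num [Real.one_rpow]
  have hval3 : (∫ u in u'..1, (1 - u) ^ (α + 1/2)) = (1 - u')^(α+3/2)/(α+3/2) := by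
    rw [show (∫ u in u'..1, (1 - u) ^ (α + 1/2))
        = ∫ x in (1 - 1)..(1 - u'), x ^ (α + 1/2) from
      intervalIntegral.integral_comp_sub_left (fun x : ℝ => x ^ (α + 1/2)) 1]
    rw [integral_rpow (Or.inl (by linarith))]
    rw [show α + 1/2 + 1 = α + 3/2 by ring]
    rw [show (1:ℝ) - 1 = 0 by norm_num, Real.zero_rpow (ne_of_gt hp0)]
    ring
  -- nonnegativity of the primitive
  have hg_nonneg : ∀ u : ℝ, 0 ≤ u → u ≤ 1 →
      0 ≤ ∫ w in (0:ℝ)..u, (1 - w ^ 2) ^ (α - 1/2) := by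
    intro u h0 h1u
    apply intervalIntegral.integral_nonneg h0
    intro w hw
    apply Real.rpow_nonneg
    nlinarith [hw.1, hw.2]
  -- absolute value identity
  have habs : ∀ u : ℝ, 0 ≤ u → u ≤ 1 →
      |PiFun α u| = (-c) * ∫ w in (0:ℝ)..u, (1 - w ^ 2) ^ (α - 1/2) := by
    intro u h0 h1u
    have hPg : PiFun α u = c * ∫ w in (0:ℝ)..u, (1 - w ^ 2) ^ (α - 1/2) := by rw [hc]; rfl
    have hgn := hg_nonneg u h0 h1u
    have hle : c * (∫ w in (0:ℝ)..u, (1 - w ^ 2) ^ (α - 1/2)) ≤ 0 := by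
      linarith [mul_nonneg hKpos.le hgn]
    rw [hPg, abs_of_nonpos hle]
    ring
  -- pointwise upper bound
  have hptUB : ∀ u : ℝ, 0 ≤ u → u < 1 →
      |PiFun α u| ≤ (-c)/(-(α+1/2)) * (1-u)^(α+1/2) := by
    intro u h0 h1u
    rw [habs u h0 h1u.le]
    have h1 : (∫ w in (0:ℝ)..u, (1 - w ^ 2) ^ (α - 1/2))
        ≤ (1 - (1-u)^(α+1/2)) / (α+1/2) := by
      rw [← hval2 u h0 h1u]
      apply intervalIntegral.integral_mono_on h0 (hIf1 0 u le_rfl h0 h1u) (hIf2 u h0 h1u)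
      intro w hw
      have hw0 := hw.1
      have hw1 : w < 1 := lt_of_le_of_lt hw.2 h1u
      rw [show (1:ℝ) - w^2 = (1-w)*(1+w) by ring,
        Real.mul_rpow (by linarith) (by linarith)]
      calc (1-w)^(α-1/2) * (1+w)^(α-1/2)
          ≤ (1-w)^(α-1/2) * 1 := by
            exact mul_le_mul_of_nonneg_left
              (Real.rpow_le_one_of_one_le_of_nonpos (by linarith) (by linarith))
              (Real.rpow_nonneg (by linarith) _)
        _ = (1-w)^(α-1/2) := mul_one _
    have h2 : (1 - (1-u)^(α+1/2))/(α+1/2) ≤ (1-u)^(α+1/2) / (-(α+1/2)) := by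
      rw [div_neg, ← neg_div, div_le_div_right_of_neg (show (α+1/2) < 0 by linarith)]
      have h1u' : (1:ℝ) ≤ (1-u)^(α+1/2) ∨ True := Or.inr trivial
      linarith
    calc (-c) * ∫ w in (0:ℝ)..u, (1 - w ^ 2) ^ (α - 1/2)
        ≤ (-c) * ((1 - (1-u)^(α+1/2))/(α+1/2)) := mul_le_mul_of_nonneg_left h1 hKpos.le
      _ ≤ (-c) * ((1-u)^(α+1/2) / (-(α+1/2))) := mul_le_mul_of_nonneg_left h2 hKpos.le
      _ = (-c)/(-(α+1/2)) * (1-u)^(α+1/2) := by ring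
  -- pointwise lower bound
  have hptLB : ∀ u : ℝ, 0 ≤ u → u < 1 →
      ((-c) * 2^(α-1/2)/(α+1/2)) * (1 - (1-u)^(α+1/2)) ≤ |PiFun α u| := by
    intro u h0 h1u
    rw [habs u h0 h1u.le]
    have h1 : 2^(α-1/2) * ((1 - (1-u)^(α+1/2))/(α+1/2))
        ≤ ∫ w in (0:ℝ)..u, (1 - w ^ 2) ^ (α - 1/2) := by
      rw [← hval2 u h0 h1u, ← intervalIntegral.integral_const_mul]
      apply intervalIntegral.integral_mono_on h0
        ((hIf2 u h0 h1u).const_mul _) (hIf1 0 u le_rfl h0 h1u)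
      intro w hw
      have hw0 := hw.1
      have hw1 : w < 1 := lt_of_le_of_lt hw.2 h1u
      rw [show (1:ℝ) - w^2 = (1-w)*(1+w) by ring,
        Real.mul_rpow (by linarith) (by linarith), mul_comm ((2:ℝ)^(α-1/2)) _]
      exact mul_le_mul_of_nonneg_left
        (Real.rpow_le_rpow_of_nonpos (by linarith) (by linarith) (by linarith))
        (Real.rpow_nonneg (by linarith) _)
    calc ((-c) * 2^(α-1/2)/(α+1/2)) * (1 - (1-u)^(α+1/2))
        = (-c) * (2^(α-1/2) * ((1 - (1-u)^(α+1/2))/(α+1/2))) := by ring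
      _ ≤ (-c) * ∫ w in (0:ℝ)..u, (1 - w ^ 2) ^ (α - 1/2) :=
          mul_le_mul_of_nonneg_left h1 hKpos.le
  -- measurability of |PiFun| on (u', 1)
  have hmono : MonotoneOn (fun u : ℝ => ∫ w in (0:ℝ)..u, (1 - w ^ 2) ^ (α - 1/2))
      (Set.Ioo u' 1) := by
    intro x hx y hy hxy
    have h0x : 0 ≤ x := le_trans hu0 hx.1.le
    have hadd := intervalIntegral.integral_add_adjacent_intervals
      (hIf1 0 x le_rfl h0x hx.2) (hIf1 x y h0x hxy hy.2)
    have hnn : 0 ≤ ∫ w in x..y, (1 - w ^ 2) ^ (α - 1/2) := by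
      apply intervalIntegral.integral_nonneg hxy
      intro w hw
      apply Real.rpow_nonneg
      nlinarith [hw.1, hw.2, hy.2, h0x]
    dsimp only
    linarith [hadd]
  have hmeasg : AEMeasurable (fun u : ℝ => ∫ w in (0:ℝ)..u, (1 - w ^ 2) ^ (α - 1/2))
      (volume.restrict (Set.Ioo u' 1)) :=
    aemeasurable_restrict_of_monotoneOn measurableSet_Ioo hmono
  have hmeasP : AEStronglyMeasurable (fun u : ℝ => |PiFun α u|)
      (volume.restrict (Set.Ioo u' 1)) := by
    have h1 : (fun u : ℝ => |PiFun α u|)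
        = fun u : ℝ => |c * ∫ w in (0:ℝ)..u, (1 - w ^ 2) ^ (α - 1/2)| := by
      funext u; rw [hc]; rfl
    rw [h1]
    exact (measurable_abs.comp_aemeasurable (hmeasg.const_mul c)).aestronglyMeasurable
  -- interval integrability of |PiFun|
  have hintP : IntervalIntegrable (fun u : ℝ => |PiFun α u|) volume u' 1 := by
    rw [intervalIntegrable_iff_integrableOn_Ioc_of_le hu1,
      integrableOn_Ioc_iff_integrableOn_Ioo]
    apply Integrable.mono' (g := fun u : ℝ => (-c)/(-(α+1/2)) * (1-u)^(α+1/2))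
      ?_ hmeasP ?_
    · exact ((hIf3.const_mul _).1).mono_set Set.Ioo_subset_Ioc_self
    · filter_upwards [ae_restrict_mem measurableSet_Ioo] with u hu
      rw [Real.norm_eq_abs, abs_abs]
      exact hptUB u (le_trans hu0 hu.1.le) hu.2
  -- integral values
  have hIUBval : (∫ u in u'..1, (-c)/(-(α+1/2)) * (1-u)^(α+1/2))
      = (-c)/(-(α+1/2)) * ((1-u')^(α+3/2)/(α+3/2)) := by
    rw [intervalIntegral.integral_const_mul, hval3]
  have hILB : IntervalIntegrable
      (fun u : ℝ => ((-c) * 2^(α-1/2)/(α+1/2)) * (1 - (1-u)^(α+1/2))) volume u' 1 :=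
    (intervalIntegrable_const.sub hIf3).const_mul _
  have hILBval : (∫ u in u'..1, ((-c) * 2^(α-1/2)/(α+1/2)) * (1 - (1-u)^(α+1/2)))
      = ((-c) * 2^(α-1/2)/(α+1/2)) * ((1 - u') - (1-u')^(α+3/2)/(α+3/2)) := by
    rw [intervalIntegral.integral_const_mul,
      intervalIntegral.integral_sub intervalIntegrable_const hIf3, hval3,
      intervalIntegral.integral_const, smul_eq_mul, mul_one]
  -- a.e. facts
  have hne1' : ∀ᵐ x : ℝ ∂(volume.restrict (Set.Icc u' 1)), x ≠ 1 := by
    apply ae_restrict_of_ae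
    refine MeasureTheory.ae_iff.2 ?_
    simpa using Real.volume_singleton
  have hmem : ∀ᵐ x : ℝ ∂(volume.restrict (Set.Icc u' 1)), x ∈ Set.Icc u' 1 :=
    ae_restrict_mem measurableSet_Icc
  -- integral comparisons
  have hup : (∫ u in u'..1, |PiFun α u|)
      ≤ ∫ u in u'..1, (-c)/(-(α+1/2)) * (1-u)^(α+1/2) := by
    apply intervalIntegral.integral_mono_ae_restrict hu1 hintP (hIf3.const_mul _)
    filter_upwards [hne1', hmem] with u hne hu
    exact hptUB u (le_trans hu0 hu.1) (lt_of_le_of_ne hu.2 hne)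
  have hlow : (∫ u in u'..1, ((-c) * 2^(α-1/2)/(α+1/2)) * (1 - (1-u)^(α+1/2)))
      ≤ ∫ u in u'..1, |PiFun α u| := by
    apply intervalIntegral.integral_mono_ae_restrict hu1 hILB hintP
    filter_upwards [hne1', hmem] with u hne hu
    exact hptLB u (le_trans hu0 hu.1) (lt_of_le_of_ne hu.2 hne)
  -- final arithmetic
  have hA1 : 1 - u' ≤ (1-u')^(α+3/2) := by
    nth_rewrite 1 [← Real.rpow_one (1-u')]
    exact Real.rpow_le_rpow_of_exponent_ge (by linarith) (by linarith) hp1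
  have hA0 : 0 ≤ (1-u')^(α+3/2) := Real.rpow_nonneg (by linarith) _
  have hS0 : 0 ≤ (1+u')^(α+3/2) := Real.rpow_nonneg (by linarith) _
  have hS1 : 1 ≤ (1+u')^(α+3/2) := Real.one_le_rpow (by linarith) hp0.le
  have h2eq : (2:ℝ)^(α+3/2) = 4 * 2^(α-1/2) := by
    rw [show α + 3/2 = (α - 1/2) + 2 by ring, Real.rpow_add two_pos,
      show (2:ℝ) = ((2:ℕ):ℝ) by norm_num, Real.rpow_natCast]
    norm_num
    ring
  have hS2 : (1+u')^(α+3/2) ≤ 4 * 2^(α-1/2) := by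
    rw [← h2eq]
    exact Real.rpow_le_rpow (by linarith) (by linarith) hp0.le
  have ht0 : 0 < (2:ℝ)^(α-1/2) := Real.rpow_pos_of_pos two_pos _
  have hrho : rhoFun α u' = C * ((1-u')^(α+3/2) * (1+u')^(α+3/2)) := by
    unfold rhoFun
    rw [← hC, Real.mul_rpow (by linarith) (by linarith)]
  have habsq : |α + 1/2| = -(α+1/2) := abs_of_neg (by linarith)
  have hCP : (0:ℝ) ≤ C / ((α+1)*(α+2)) := div_nonneg hCpos.le (mul_pos h1pos h2pos).le
  have hip : (α+3/2) * (α+3/2)⁻¹ = 1 := mul_inv_cancel₀ hne_p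
  have hie : (α+1/2) * (α+1/2)⁻¹ = 1 := mul_inv_cancel₀ hne_e
  have hieneg : (-(α+1/2)) * (-(α+1/2))⁻¹ = 1 := mul_inv_cancel₀ (neg_ne_zero.2 hne_e)
  have hXpos : (0:ℝ) < (α+1)*(α+2) := mul_pos h1pos h2pos
  have hU : (-c)/(-(α+1/2)) = C * (α+3/2) / ((α+1)*(α+2)) := by
    rw [hKC]
    linear_combination (C * (α+3/2) / ((α+1)*(α+2))) * hieneg
  have hL : (-c) * 2^(α-1/2)/(α+1/2)
      = -(C * (α+3/2) * 2^(α-1/2) / ((α+1)*(α+2))) := by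
    rw [hKC]
    linear_combination (-(C * (α+3/2) * 2^(α-1/2) / ((α+1)*(α+2)))) * hie
  constructor
  · -- lower bound
    refine le_trans ?_ hlow
    rw [hILBval, habsq, hrho, hL]
    have hcore : -(α+1/2) * ((1-u')^(α+3/2) * (1+u')^(α+3/2)) / 4
        ≤ 2^(α-1/2) * ((1-u')^(α+3/2) - (α+3/2)*(1-u')) := by
      have h1 : -(α+1/2) * ((1-u')^(α+3/2) * (1+u')^(α+3/2))
          ≤ -(α+1/2) * ((1-u')^(α+3/2) * (4 * 2^(α-1/2))) :=
        mul_le_mul_of_nonneg_left (mul_le_mul_of_nonneg_left hS2 hA0) hq0.le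
      have h3 : 2^(α-1/2) * ((α+3/2)*(1-u')) ≤ 2^(α-1/2) * ((α+3/2)*(1-u')^(α+3/2)) :=
        mul_le_mul_of_nonneg_left (mul_le_mul_of_nonneg_left hA1 hp0.le) ht0.le
      linarith [h1, h3]
    have hR2 : (-(C * (α+3/2) * 2^(α-1/2) / ((α+1)*(α+2))))
          * ((1 - u') - (1-u')^(α+3/2)/(α+3/2))
        = (C / ((α+1)*(α+2)))
          * (2^(α-1/2) * ((1-u')^(α+3/2) - (α+3/2)*(1-u'))) := by
      linear_combination (C * 2^(α-1/2) * (1-u')^(α+3/2) / ((α+1)*(α+2))) * hip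
    rw [hR2, show (4:ℝ) * (α + 1) * (α + 2) = 4 * ((α+1)*(α+2)) by ring, ← div_div]
    calc -(α + 1/2) / 4 / ((α+1)*(α+2)) * (C * ((1-u')^(α+3/2) * (1+u')^(α+3/2)))
        = (C / ((α+1)*(α+2)))
          * (-(α+1/2) * ((1-u')^(α+3/2) * (1+u')^(α+3/2)) / 4) := by
          ring
      _ ≤ (C / ((α+1)*(α+2)))
          * (2^(α-1/2) * ((1-u')^(α+3/2) - (α+3/2)*(1-u'))) :=
          mul_le_mul_of_nonneg_left hcore hCP
  · -- upper bound
    refine le_trans hup ?_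
    rw [hIUBval, hrho, hU]
    have hE2 : (C * (α+3/2) / ((α+1)*(α+2))) * ((1-u')^(α+3/2)/(α+3/2))
        = (C / ((α+1)*(α+2))) * (1-u')^(α+3/2) := by
      linear_combination (C * (1-u')^(α+3/2) / ((α+1)*(α+2))) * hip
    rw [hE2]
    have hAS : (1-u')^(α+3/2) ≤ (1-u')^(α+3/2) * (1+u')^(α+3/2) :=
      le_mul_of_one_le_right hA0 hS1
    calc (C / ((α+1)*(α+2))) * (1-u')^(α+3/2)
        ≤ (C / ((α+1)*(α+2))) * ((1-u')^(α+3/2) * (1+u')^(α+3/2)) :=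
          mul_le_mul_of_nonneg_left hAS hCP
      _ = 1 / ((α + 1) * (α + 2)) * (C * ((1-u')^(α+3/2) * (1+u')^(α+3/2))) := by ring
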